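/- Suppose a subset L of women declare false preferences in the men-proposing Gale-Shapley algorithm. If no woman in L is worse-off (according to her true preferences), then no man is better-off: no man truly prefers his new partner to his original partner. -/

import Mathlib

namespace GS

/-- The `k` most-preferred elements of `S` according to the rank function `rank`
(lower rank = more preferred); if `S` has at most `k` elements this is all of `S`. -/
def topk {α : Type*} [DecidableEq α] (rank : α → ℕ) (k : ℕ) (S : Finset α) : Finset α :=
  S.filter fun a => (S.filter fun b => rank b < rank a).card < k

/-- An instance of the stable-matching problem with `n` women and `n` men.
`mpref m w` is the rank man `m` assigns to woman `w` (lower = more preferred),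
and `wpref w m` is the rank woman `w` assigns to man `m`. -/
structure Instance (n : ℕ) where
  mpref : Fin n → Fin n → ℕ
  wpref : Fin n → Fin n → ℕ
  mprefInj : ∀ m, Function.Injective (mpref m)
  wprefInj : ∀ w, Function.Injective (wpref w)

variable {n : ℕ}

/-- `prefers p a b` : `a` is strictly preferred to `b` under rank function `p`. -/
def prefers (p : Fin n → ℕ) (a b : Fin n) : Prop := p a < p b

/-- Given the current state `avail m` (the women who have not yet rejected man `m`),
the set of women man `m` proposes to tonight: his most-preferred available woman
(a singleton, or empty if no woman is available). -/
def proposals (I : Instance n) (avail : Fin n → Finset (Fin n)) (m : Fin n) :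
    Finset (Fin n) := topk (I.mpref m) 1 (avail m)

/-- The men proposing to woman `w` tonight. -/
def proposersOf (I : Instance n) (avail : Fin n → Finset (Fin n)) (w : Fin n) :
    Finset (Fin n) := Finset.univ.filter fun m => w ∈ proposals I avail m

/-- The men rejected by woman `w` tonight: all of tonight's proposers except
her most-preferred one. -/
def rejectedBy (I : Instance n) (avail : Fin n → Finset (Fin n)) (w : Fin n) :
    Finset (Fin n) := proposersOf I avail w \ topk (I.wpref w) 1 (proposersOf I avail w)

/-- One night of the men-proposing Gale-Shapley algorithm. -/
def step (I : Instance n) (avail : Fin n → Finset (Fin n)) :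
    Fin n → Finset (Fin n) :=
  fun m => (avail m).filter fun w => m ∉ rejectedBy I avail w

/-- `nights I t m` : the set of women who have not rejected man `m` before night `t`
(initially all women). -/
def nights (I : Instance n) (t : ℕ) : Fin n → Finset (Fin n) :=
  (step I)^[t] (fun _ => Finset.univ)

/-- The algorithm has terminated by night `T`: no man is rejected on night `T`. -/
def Stopped (I : Instance n) (T : ℕ) : Prop := step I (nights I T) = nights I T

/-- On night `T`, each man `m` serenades exactly under the window of `μ m`. -/
def MatchesAt (I : Instance n) (T : ℕ) (μ : Fin n ≃ Fin n) : Prop :=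
  ∀ m, proposals I (nights I T) m = {μ m}

/-- The bijection `μ` (from men to women) is the outcome of the men-proposing
Gale-Shapley algorithm on instance `I`: for some night `T` no rejection occurs and
every man `m` is matched with `μ m`. -/
def IsGSMatching (I : Instance n) (μ : Fin n ≃ Fin n) : Prop :=
  ∃ T, Stopped I T ∧ MatchesAt I T μ

/-- Stability of a matching `μ` (men to women): there is no unmatched pair `(w, m)`
each of whom strictly prefers the other to their partner under `μ`. -/
def Stable (I : Instance n) (μ : Fin n ≃ Fin n) : Prop :=
  ¬ ∃ m w, μ m ≠ w ∧ I.mpref m w < I.mpref m (μ m) ∧ I.wpref w m < I.wpref w (μ.symm w)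

/-- The instance in which the women in `L` replace their true preferences by the
false preference rankings `f`, everyone else being truthful. -/
def liarInstance (I : Instance n) (L : Finset (Fin n))
    (f : Fin n → Fin n → ℕ) (hf : ∀ w, Function.Injective (f w)) : Instance n where
  mpref := I.mpref
  wpref := fun w => if w ∈ L then f w else I.wpref w
  mprefInj := I.mprefInj
  wprefInj := fun w => by split_ifs; exacts [hf w, I.wprefInj w]

end GS

namespace GS

variable {n : ℕ} (I : Instance n)

lemma mem_topk_one {α : Type*} [DecidableEq α] {rank : α → ℕ} {S : Finset α} {a : α} :
    a ∈ topk rank 1 S ↔ a ∈ S ∧ ∀ b ∈ S, ¬ rank b < rank a := by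
  simp only [topk, Finset.mem_filter, Nat.lt_one_iff, Finset.card_eq_zero,
    Finset.filter_eq_empty_iff]

lemma topk_one_nonempty {α : Type*} [DecidableEq α] {rank : α → ℕ} {S : Finset α}
    (h : S.Nonempty) : (topk rank 1 S).Nonempty := by
  obtain ⟨a, ha, hmin⟩ := S.exists_min_image rank h
  exact ⟨a, mem_topk_one.mpr ⟨ha, fun b hb => not_lt.mpr (hmin b hb)⟩⟩

lemma nights_succ (t : ℕ) : nights I (t + 1) = step I (nights I t) :=
  Function.iterate_succ_apply' _ _ _

lemma mem_nights_succ {t : ℕ} {m w : Fin n} :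
    w ∈ nights I (t + 1) m ↔ w ∈ nights I t m ∧ m ∉ rejectedBy I (nights I t) w := by
  rw [nights_succ]
  simp [step]

lemma nights_subset (t : ℕ) (m : Fin n) : nights I (t + 1) m ⊆ nights I t m :=
  fun _ hw => ((mem_nights_succ I).mp hw).1

lemma nights_mono {s t : ℕ} (h : s ≤ t) (m : Fin n) : nights I t m ⊆ nights I s m := by
  induction t with
  | zero => cases Nat.le_zero.mp h; exact subset_rfl
  | succ t ih =>
    rcases Nat.lt_or_ge s (t + 1) with hlt | hge
    · exact (nights_subset I t m).trans (ih (Nat.lt_succ_iff.mp hlt))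
    · cases le_antisymm h hge; exact subset_rfl

lemma mem_proposals {A : Fin n → Finset (Fin n)} {m w : Fin n} :
    w ∈ proposals I A m ↔ w ∈ A m ∧ ∀ b ∈ A m, ¬ I.mpref m b < I.mpref m w := by
  rw [proposals]; exact mem_topk_one

lemma mem_proposersOf {A : Fin n → Finset (Fin n)} {w m : Fin n} :
    m ∈ proposersOf I A w ↔ w ∈ proposals I A m := by
  simp [proposersOf]

lemma rejectedBy_spec {A : Fin n → Finset (Fin n)} {w m : Fin n}
    (h : m ∈ rejectedBy I A w) :
    m ∈ proposersOf I A w ∧ ∃ m' ∈ proposersOf I A w, I.wpref w m' < I.wpref w m := by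
  rw [rejectedBy, Finset.mem_sdiff] at h
  obtain ⟨h1, h2⟩ := h
  refine ⟨h1, ?_⟩
  by_contra hc
  push_neg at hc
  exact h2 (mem_topk_one.mpr ⟨h1, fun b hb => not_lt.mpr (hc b hb)⟩)

lemma best_persists {t : ℕ} {w m : Fin n}
    (h : m ∈ topk (I.wpref w) 1 (proposersOf I (nights I t) w)) :
    m ∈ proposersOf I (nights I (t + 1)) w := by
  have hm := mem_topk_one.mp h
  have hp : m ∈ proposersOf I (nights I t) w := hm.1
  have hw := (mem_proposals I).mp ((mem_proposersOf I).mp hp)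
  have hnr : m ∉ rejectedBy I (nights I t) w := fun hr => (Finset.mem_sdiff.mp hr).2 h
  have hw1 : w ∈ nights I (t + 1) m := (mem_nights_succ I).mpr ⟨hw.1, hnr⟩
  exact (mem_proposersOf I).mpr ((mem_proposals I).mpr
    ⟨hw1, fun b hb => hw.2 b (nights_subset I t m hb)⟩)

lemma women_improve {t s : ℕ} {w m : Fin n} (hts : t ≤ s)
    (h : m ∈ proposersOf I (nights I t) w) :
    ∃ m' ∈ proposersOf I (nights I s) w, I.wpref w m' ≤ I.wpref w m := by
  induction s with
  | zero => cases Nat.le_zero.mp hts; exact ⟨m, h, le_rfl⟩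
  | succ s ih =>
    rcases Nat.lt_or_ge t (s + 1) with hlt | hge
    · obtain ⟨m'', hm'', hle⟩ := ih (Nat.lt_succ_iff.mp hlt)
      obtain ⟨mb, hmb⟩ := topk_one_nonempty (rank := I.wpref w) ⟨m'', hm''⟩
      have hle2 : I.wpref w mb ≤ I.wpref w m'' :=
        not_lt.mp ((mem_topk_one.mp hmb).2 m'' hm'')
      exact ⟨mb, best_persists I hmb, hle2.trans hle⟩
    · cases le_antisymm hts hge; exact ⟨m, h, le_rfl⟩

lemma nights_stopped {T : ℕ} (h : Stopped I T) {s : ℕ} (hs : T ≤ s) :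
    nights I s = nights I T := by
  induction s with
  | zero => cases Nat.le_zero.mp hs; rfl
  | succ s ih =>
    rcases Nat.lt_or_ge T (s + 1) with hlt | hge
    · rw [nights_succ, ih (Nat.lt_succ_iff.mp hlt), h]
    · cases le_antisymm hs hge; rfl

lemma proposersOf_at_match {T : ℕ} {μ : Fin n ≃ Fin n} (hT : MatchesAt I T μ) (w : Fin n) :
    proposersOf I (nights I T) w = {μ.symm w} := by
  ext m
  rw [mem_proposersOf, hT m, Finset.mem_singleton, Finset.mem_singleton]
  constructor
  · rintro rfl; exact (Equiv.symm_apply_apply μ m).symm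
  · rintro rfl; exact (Equiv.apply_symm_apply μ w).symm

lemma final_best {T : ℕ} {μ : Fin n ≃ Fin n} (hstop : Stopped I T) (hT : MatchesAt I T μ)
    {t : ℕ} {w m : Fin n} (h : m ∈ proposersOf I (nights I t) w) :
    I.wpref w (μ.symm w) ≤ I.wpref w m := by
  obtain ⟨m', hm', hle⟩ := women_improve I (le_max_left t T) h
  rw [nights_stopped I hstop (le_max_right t T), proposersOf_at_match I hT,
    Finset.mem_singleton] at hm'
  rw [hm'] at hle
  exact hle

lemma exists_rejection {m x : Fin n} (T : ℕ) (h : x ∉ nights I T m) :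
    ∃ t, x ∈ nights I t m ∧ m ∈ rejectedBy I (nights I t) x := by
  induction T with
  | zero => exact absurd (Finset.mem_univ x) h
  | succ T ih =>
    by_cases hx : x ∈ nights I T m
    · refine ⟨T, hx, ?_⟩
      by_contra hc
      exact h ((mem_nights_succ I).mpr ⟨hx, hc⟩)
    · exact ih hx

lemma better_not_avail {T : ℕ} {μ : Fin n ≃ Fin n} (hT : MatchesAt I T μ) {m x : Fin n}
    (hx : I.mpref m x < I.mpref m (μ m)) : x ∉ nights I T m := by
  intro hmem
  have h1 : μ m ∈ proposals I (nights I T) m := by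
    rw [hT m]; exact Finset.mem_singleton_self _
  exact ((mem_proposals I).mp h1).2 x hmem hx

lemma gs_no_blocking {μ : Fin n ≃ Fin n} (hμ : IsGSMatching I μ) {m w : Fin n}
    (hx : I.mpref m w < I.mpref m (μ m)) :
    I.wpref w (μ.symm w) < I.wpref w m := by
  obtain ⟨T, hstop, hT⟩ := hμ
  obtain ⟨t, _, hrej⟩ := exists_rejection I T (better_not_avail I hT hx)
  obtain ⟨_, m', hm', hlt⟩ := rejectedBy_spec I hrej
  exact lt_of_le_of_lt (final_best I hstop hT hm') hlt

end GS

open GS in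
/-- If the lying women `L` are all not worse-off (under their true preferences),
then no man is better-off: no man truly prefers his new partner to his original
partner. -/
theorem no_liar_worse_off_implies_no_man_better_off (n : ℕ) (I : GS.Instance n)
    (L : Finset (Fin n)) (f : Fin n → Fin n → ℕ) (hf : ∀ w, Function.Injective (f w))
    (O N : Fin n ≃ Fin n)
    (hO : IsGSMatching I O) (hN : IsGSMatching (liarInstance I L f hf) N)
    (hliars : ∀ w ∈ L, ¬ prefers (I.wpref w) (O.symm w) (N.symm w)) :
    ∀ m, ¬ prefers (I.mpref m) (N m) (O m) := by
  classical
  intro m0 hpref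
  rw [prefers] at hpref
  obtain ⟨T, hstop, hT⟩ := hO
  -- In the true run, some man is rejected by his N-partner.
  have hex : ∃ t, ∃ m : Fin n, m ∈ rejectedBy I (nights I t) (N m) := by
    obtain ⟨t, _, hrej⟩ := exists_rejection I T (better_not_avail I hT hpref)
    exact ⟨t, m0, hrej⟩
  -- take the first night on which this happens
  let t := Nat.find hex
  obtain ⟨m, hrej⟩ : ∃ m : Fin n, m ∈ rejectedBy I (nights I t) (N m) := Nat.find_spec hex
  set w := N m with hwdef
  obtain ⟨-, m', hm', hlt⟩ := rejectedBy_spec I hrej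
  -- m' has not been rejected by his own N-partner before night t
  have hNm' : N m' ∈ nights I t m' := by
    by_contra hc
    obtain ⟨s, hs1, hs2⟩ := exists_rejection I t hc
    have hst : s < t := by
      by_contra hge
      exact hc (nights_mono I (not_lt.mp hge) m' hs1)
    exact Nat.find_min hex hst ⟨m', hs2⟩
  -- m' prefers w to his own N-partner
  have hwprop := (mem_proposals I).mp ((mem_proposersOf I).mp hm')
  have hmm' : m ≠ m' := fun h => by rw [h] at hlt; exact lt_irrefl _ hlt
  have hwne : w ≠ N m' := fun h => hmm' (N.injective h)
  have hmlt : I.mpref m' w < I.mpref m' (N m') := by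
    have hle : ¬ I.mpref m' (N m') < I.mpref m' w := hwprop.2 (N m') hNm'
    rcases lt_or_eq_of_le (not_lt.mp hle) with h | h
    · exact h
    · exact absurd (I.mprefInj m' h) hwne
  have hNsymm : N.symm w = m := Equiv.symm_apply_apply N m
  by_cases hwL : w ∈ L
  · -- w is a liar: she is not worse off, but in the true run she rejected m = N⁻¹ w
    -- in favor of m', and her true-run partner O⁻¹ w is at least as good as m'.
    have h1 : ¬ I.wpref w (O.symm w) < I.wpref w (N.symm w) := hliars w hwL
    rw [hNsymm] at h1
    have h2 : I.wpref w (O.symm w) ≤ I.wpref w m' := final_best I hstop hT hm'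
    omega
  · -- w is truthful: (m', w) would block N in the false instance.
    have hblock := gs_no_blocking (liarInstance I L f hf) hN (m := m') (w := w) hmlt
    rw [hNsymm] at hblock
    have hJ : (liarInstance I L f hf).wpref w = I.wpref w := by
      simp [liarInstance, hwL]
    rw [hJ] at hblock
    omega
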